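/- arXiv:2603.28764 — 2 statements merged into one kernel-verified Lean document; each statement's English description precedes it below -/
import Mathlib

section
/- The spectral ratio satisfies the triangle inequality: for symmetric positive definite m×m matrices G, G', G'', d_SR(G, G'') ≤ d_SR(G, G') + d_SR(G', G''). -/
open Matrix

/-- The set of generalized eigenvalues of the pair `(M, N)`. -/
def genEig {m : ℕ} (M N : Matrix (Fin m) (Fin m) ℝ) : Set ℝ :=
  {lam | ∃ v : Fin m → ℝ, v ≠ 0 ∧ M.mulVec v = lam • N.mulVec v}

/-- The spectral ratio `d_SR(G,G') = 1 - √(λ_min/λ_max)`. -/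
noncomputable def dSR {m : ℕ} (G G' : Matrix (Fin m) (Fin m) ℝ) : ℝ :=
  1 - Real.sqrt (sInf (genEig G G') / sSup (genEig G G'))

section aux

variable {m : ℕ} {M N : Matrix (Fin m) (Fin m) ℝ}

private lemma sym_dot {A : Matrix (Fin m) (Fin m) ℝ} (hA : Aᵀ = A) (x y : Fin m → ℝ) :
    (A *ᵥ x) ⬝ᵥ y = x ⬝ᵥ (A *ᵥ y) := by
  rw [dotProduct_comm, dotProduct_mulVec, ← mulVec_transpose, hA, dotProduct_comm,
    dotProduct_comm x]

open scoped MatrixOrder in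
lemma genEig_facts (hm : 0 < m) (hM : M.PosDef) (hN : N.PosDef) :
    IsGreatest (genEig M N) (sSup (genEig M N)) ∧
    IsLeast (genEig M N) (sInf (genEig M N)) ∧
    (∀ lam ∈ genEig M N, 0 < lam) ∧
    (∀ v : Fin m → ℝ, v ⬝ᵥ M.mulVec v ≤ sSup (genEig M N) * (v ⬝ᵥ N.mulVec v)) ∧
    (∀ v : Fin m → ℝ, sInf (genEig M N) * (v ⬝ᵥ N.mulVec v) ≤ v ⬝ᵥ M.mulVec v) := by
  haveI : NeZero m := ⟨hm.ne'⟩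
  classical
  -- positivity of quadratic forms
  have hposM : ∀ v : Fin m → ℝ, v ≠ 0 → 0 < v ⬝ᵥ M *ᵥ v := by
    intro v hv; simpa using hM.dotProduct_mulVec_pos hv
  have hposN : ∀ v : Fin m → ℝ, v ≠ 0 → 0 < v ⬝ᵥ N *ᵥ v := by
    intro v hv; simpa using hN.dotProduct_mulVec_pos hv
  -- square root of N
  set C : Matrix (Fin m) (Fin m) ℝ := CFC.sqrt N with hCdef
  have hCC : C * C = N := CFC.sqrt_mul_sqrt_self N hN.posSemidef.nonneg
  have hCH : C.IsHermitian := (CFC.sqrt_nonneg N).posSemidef.1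
  have hCT : Cᵀ = C := by rw [← conjTranspose_eq_transpose_of_trivial, hCH.eq]
  have hdetC : IsUnit C.det := by
    have h1 : C.det * C.det = N.det := by rw [← det_mul, hCC]
    have h2 : (0:ℝ) < N.det := hN.det_pos
    have : C.det ≠ 0 := by intro h; rw [h, mul_zero] at h1; linarith
    exact isUnit_iff_ne_zero.mpr this
  have hCiC : C⁻¹ * C = 1 := nonsing_inv_mul C hdetC
  have hCCi : C * C⁻¹ = 1 := mul_nonsing_inv C hdetC
  have hCiT : C⁻¹ᵀ = C⁻¹ := by rw [transpose_nonsing_inv, hCT]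
  set S : Matrix (Fin m) (Fin m) ℝ := C⁻¹ * M * C⁻¹ with hSdef
  have hMT : Mᵀ = M := by rw [← conjTranspose_eq_transpose_of_trivial, hM.1.eq]
  have hSH : S.IsHermitian := by
    rw [IsHermitian, conjTranspose_eq_transpose_of_trivial, hSdef, transpose_mul,
      transpose_mul, hCiT, hMT, mul_assoc]
  have hCiv : ∀ v : Fin m → ℝ, C⁻¹ *ᵥ (C *ᵥ v) = v := by
    intro v; rw [mulVec_mulVec, hCiC, one_mulVec]
  have hCvi : ∀ v : Fin m → ℝ, C *ᵥ (C⁻¹ *ᵥ v) = v := by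
    intro v; rw [mulVec_mulVec, hCCi, one_mulVec]
  -- quadratic form correspondences
  have hformM : ∀ w : Fin m → ℝ, (C⁻¹ *ᵥ w) ⬝ᵥ M *ᵥ (C⁻¹ *ᵥ w) = w ⬝ᵥ S *ᵥ w := by
    intro w
    rw [sym_dot hCiT w (M *ᵥ C⁻¹ *ᵥ w), mulVec_mulVec, mulVec_mulVec]
  have hformN : ∀ w : Fin m → ℝ, (C⁻¹ *ᵥ w) ⬝ᵥ N *ᵥ (C⁻¹ *ᵥ w) = w ⬝ᵥ w := by
    intro w
    rw [← hCC, ← mulVec_mulVec, hCvi, sym_dot hCiT, hCiv]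
  -- the symmetric operator on Euclidean space
  set E := EuclideanSpace ℝ (Fin m) with hE
  set eqv := WithLp.equiv 2 (Fin m → ℝ) with heqv
  set T : E →ₗ[ℝ] E := Matrix.toEuclideanLin S with hTdef
  have hT : T.IsSymmetric := isHermitian_iff_isSymmetric.mp hSH
  have hTapp : ∀ x : E, eqv (T x) = S *ᵥ (eqv x) := fun _ => rfl
  have hip : ∀ x y : E, (inner ℝ x y : ℝ) = (eqv x) ⬝ᵥ (eqv y) := by
    intro x y
    simp only [PiLp.inner_apply, RCLike.inner_apply, conj_trivial, dotProduct]
    exact (PiLp.inner_apply x y).trans (Finset.sum_congr rfl fun i _ => by simp [heqv, mul_comm])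
  have hnorm : ∀ x : E, ‖x‖ ^ 2 = (eqv x) ⬝ᵥ (eqv x) := by
    intro x; rw [← real_inner_self_eq_norm_sq, hip]
  -- the Rayleigh quotient
  set R : {x : E // x ≠ 0} → ℝ := fun x => RCLike.re (inner ℝ (T x) (x : E) : ℝ) / ‖(x : E)‖ ^ 2
    with hRdef
  have hRval : ∀ (x : {x : E // x ≠ 0}),
      R x = ((eqv (x : E)) ⬝ᵥ S *ᵥ (eqv (x : E))) / ((eqv (x : E)) ⬝ᵥ (eqv (x : E))) := by
    intro x
    rw [hRdef]
    simp only [RCLike.re_to_real]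
    rw [hip, hTapp, hnorm, dotProduct_comm]
  have heqv0 : ∀ x : E, eqv x ≠ 0 ↔ x ≠ 0 := by
    intro x
    constructor
    · intro h hx; apply h; rw [hx]; rfl
    · intro h hx; apply h
      have := congrArg eqv.symm hx
      simpa [heqv] using this
  -- for a nonzero vector v, the Rayleigh quotient at C v
  have hRvec : ∀ v : Fin m → ℝ, v ≠ 0 → ∃ x : {x : E // x ≠ 0},
      R x = (v ⬝ᵥ M *ᵥ v) / (v ⬝ᵥ N *ᵥ v) := by
    intro v hv
    have hCv : C *ᵥ v ≠ 0 := by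
      intro h
      apply hv
      have := congrArg (fun z => C⁻¹ *ᵥ z) h
      simpa [hCiv] using this
    refine ⟨⟨eqv.symm (C *ᵥ v), ?_⟩, ?_⟩
    · intro h
      apply hCv
      have := congrArg eqv h
      simpa [heqv] using this
    · rw [hRval]
      have he : eqv (eqv.symm (C *ᵥ v)) = C *ᵥ v := by simp
      rw [he, ← hformM (C *ᵥ v), ← hformN (C *ᵥ v), hCiv]
  -- Rayleigh quotients are bounded
  obtain ⟨K, hK⟩ : ∃ K : ℝ, ∀ x : {x : E // x ≠ 0}, |R x| ≤ K := by
    haveI : FiniteDimensional ℝ E := by infer_instance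
    set T' := LinearMap.toContinuousLinearMap T with hT'
    refine ⟨‖T'‖, fun x => ?_⟩
    have hx : (0:ℝ) < ‖(x : E)‖ := norm_pos_iff.mpr x.2
    have h1 : |RCLike.re (inner ℝ (T x) (x : E) : ℝ)| ≤ ‖T'‖ * ‖(x:E)‖^2 := by
      simp only [RCLike.re_to_real]
      calc |(inner ℝ (T (x:E)) (x : E) : ℝ)| ≤ ‖T (x:E)‖ * ‖(x:E)‖ := abs_real_inner_le_norm _ _
        _ ≤ (‖T'‖ * ‖(x:E)‖) * ‖(x:E)‖ := by
            have : ‖T' (x:E)‖ ≤ ‖T'‖ * ‖(x:E)‖ := T'.le_opNorm _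
            have hTT : T' (x:E) = T (x:E) := rfl
            rw [hTT] at this
            exact mul_le_mul_of_nonneg_right this (norm_nonneg _)
        _ = ‖T'‖ * ‖(x:E)‖^2 := by ring
    rw [hRdef]
    have h2 : (0:ℝ) < ‖(x:E)‖^2 := by positivity
    rw [abs_div, abs_of_pos h2, div_le_iff₀ h2]
    calc |RCLike.re (inner ℝ (T x) (x : E) : ℝ)| ≤ ‖T'‖ * ‖(x:E)‖^2 := h1
      _ = _ := by ring
  have hbddA : BddAbove (Set.range R) := by
    refine ⟨K, ?_⟩; rintro r ⟨x, rfl⟩; exact (abs_le.mp (hK x)).2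
  have hbddB : BddBelow (Set.range R) := by
    refine ⟨-K, ?_⟩; rintro r ⟨x, rfl⟩; exact (abs_le.mp (hK x)).1
  -- sup and inf of Rayleigh quotients
  set lamMax : ℝ := ⨆ x : {x : E // x ≠ 0}, R x with hlamMax
  set lamMin : ℝ := ⨅ x : {x : E // x ≠ 0}, R x with hlamMin
  haveI : Nontrivial E := by
    refine nontrivial_of_ne 0 (eqv.symm (fun _ => 1)) ?_
    intro h
    have := congrArg (fun z => eqv z ⟨0, hm⟩) h
    simp at this
    exact zero_ne_one this
  -- eigenvalue membership transfer
  have hmem : ∀ lam : ℝ, Module.End.HasEigenvalue T lam → lam ∈ genEig M N := by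
    intro lam hlam
    obtain ⟨w, hw⟩ := hlam.exists_hasEigenvector
    have hw0 : w ≠ 0 := hw.2
    have hweq : T w = lam • w := hw.apply_eq_smul
    have hSw : S *ᵥ (eqv w) = lam • (eqv w) := by
      have := congrArg eqv hweq
      rw [hTapp] at this
      rw [this]
      rfl
    refine ⟨C⁻¹ *ᵥ (eqv w), ?_, ?_⟩
    · intro h
      have := congrArg (fun z => C *ᵥ z) h
      simp only [hCvi, mulVec_zero] at this
      exact (heqv0 w).mpr hw0 this
    · have h1 : M *ᵥ (C⁻¹ *ᵥ (eqv w)) = C *ᵥ (S *ᵥ (eqv w)) := by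
        rw [mulVec_mulVec, mulVec_mulVec, hSdef, ← mul_assoc, ← mul_assoc, hCCi, one_mul]
      have h2 : N *ᵥ (C⁻¹ *ᵥ (eqv w)) = C *ᵥ (eqv w) := by
        rw [← hCC, ← mulVec_mulVec, hCvi]
      rw [h1, h2, hSw, mulVec_smul]
  -- every generalized eigenvalue is a Rayleigh quotient value
  have hval : ∀ lam ∈ genEig M N, ∃ x : {x : E // x ≠ 0}, R x = lam := by
    rintro lam ⟨v, hv, hveq⟩
    obtain ⟨x, hx⟩ := hRvec v hv
    refine ⟨x, ?_⟩
    rw [hx]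
    have h1 : v ⬝ᵥ M *ᵥ v = lam * (v ⬝ᵥ N *ᵥ v) := by
      rw [hveq, dotProduct_smul, smul_eq_mul]
    rw [h1, mul_div_assoc, div_self (hposN v hv).ne', mul_one]
  -- positivity of eigenvalues
  have hpos : ∀ lam ∈ genEig M N, 0 < lam := by
    rintro lam ⟨v, hv, hveq⟩
    have h1 : v ⬝ᵥ M *ᵥ v = lam * (v ⬝ᵥ N *ᵥ v) := by
      rw [hveq, dotProduct_smul, smul_eq_mul]
    have h2 := hposM v hv
    have h3 := hposN v hv
    nlinarith
  -- lamMax, lamMin are eigenvalues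
  have hmaxmem : lamMax ∈ genEig M N := by
    apply hmem
    have := hT.hasEigenvalue_iSup_of_finiteDimensional
    exact this
  have hminmem : lamMin ∈ genEig M N := by
    apply hmem
    have := hT.hasEigenvalue_iInf_of_finiteDimensional
    exact this
  -- lamMax is the greatest element
  have hGreat : IsGreatest (genEig M N) lamMax := by
    refine ⟨hmaxmem, ?_⟩
    intro lam hlam
    obtain ⟨x, hx⟩ := hval lam hlam
    rw [← hx]
    exact le_ciSup hbddA x
  have hLeast : IsLeast (genEig M N) lamMin := by
    refine ⟨hminmem, ?_⟩
    intro lam hlam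
    obtain ⟨x, hx⟩ := hval lam hlam
    rw [← hx]
    exact ciInf_le hbddB x
  have hsSup : sSup (genEig M N) = lamMax := hGreat.csSup_eq
  have hsInf : sInf (genEig M N) = lamMin := hLeast.csInf_eq
  refine ⟨hsSup ▸ hGreat, hsInf ▸ hLeast, hpos, ?_, ?_⟩
  · intro v
    rcases eq_or_ne v 0 with rfl | hv
    · simp
    · obtain ⟨x, hx⟩ := hRvec v hv
      have h1 : R x ≤ lamMax := le_ciSup hbddA x
      rw [hx, div_le_iff₀ (hposN v hv)] at h1
      rw [hsSup]
      linarith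
  · intro v
    rcases eq_or_ne v 0 with rfl | hv
    · simp
    · obtain ⟨x, hx⟩ := hRvec v hv
      have h1 : lamMin ≤ R x := ciInf_le hbddB x
      rw [hx, le_div_iff₀ (hposN v hv)] at h1
      rw [hsInf]
      linarith

end aux

/-- the spectral ratio satisfies the triangle inequality. -/
theorem dSR_triangle {m : ℕ} (G G' G'' : Matrix (Fin m) (Fin m) ℝ)
    (hG : G.PosDef) (hG' : G'.PosDef) (hG'' : G''.PosDef) :
    dSR G G'' ≤ dSR G G' + dSR G' G'' := by
  rcases Nat.eq_zero_or_pos m with rfl | hm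
  · have hempty : ∀ P Q : Matrix (Fin 0) (Fin 0) ℝ, genEig P Q = ∅ := by
      intro P Q
      ext lam
      simp only [genEig, Set.mem_setOf_eq, Set.mem_empty_iff_false, iff_false, not_exists]
      intro v ⟨hv, _⟩
      exact hv (funext fun i => absurd i.2 (by omega))
    simp [dSR, hempty, Real.sSup_empty, Real.sInf_empty]
  · obtain ⟨hG1, hL1, hp1, hU1, hD1⟩ := genEig_facts hm hG hG'
    obtain ⟨hG2, hL2, hp2, hU2, hD2⟩ := genEig_facts hm hG' hG''
    obtain ⟨hG3, hL3, hp3, hU3, hD3⟩ := genEig_facts hm hG hG''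
    set a := sInf (genEig G G') with ha
    set A := sSup (genEig G G') with hA
    set b := sInf (genEig G' G'') with hb
    set B := sSup (genEig G' G'') with hB
    set c := sInf (genEig G G'') with hc
    set D := sSup (genEig G G'') with hD
    have hposG'' : ∀ v : Fin m → ℝ, v ≠ 0 → 0 < v ⬝ᵥ G'' *ᵥ v := by
      intro v hv; simpa using hG''.dotProduct_mulVec_pos hv
    have ha0 : 0 < a := hp1 a hL1.1
    have hA0 : 0 < A := hp1 A hG1.1
    have hb0 : 0 < b := hp2 b hL2.1
    have hB0 : 0 < B := hp2 B hG2.1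
    have hc0 : 0 < c := hp3 c hL3.1
    have hD0 : 0 < D := hp3 D hG3.1
    have haA : a ≤ A := hL1.2 hG1.1
    have hbB : b ≤ B := hL2.2 hG2.1
    -- c ≥ a * b
    have hcab : a * b ≤ c := by
      obtain ⟨v, hv, hveq⟩ := hL3.1
      have h1 : v ⬝ᵥ G *ᵥ v = c * (v ⬝ᵥ G'' *ᵥ v) := by
        rw [hveq, dotProduct_smul, smul_eq_mul]
      have h2 := hD1 v  -- a * (v ⬝ᵥ G' v) ≤ v ⬝ᵥ G v
      have h3 := hD2 v  -- b * (v ⬝ᵥ G'' v) ≤ v ⬝ᵥ G' v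
      have h4 := hposG'' v hv
      nlinarith
    -- D ≤ A * B
    have hDAB : D ≤ A * B := by
      obtain ⟨v, hv, hveq⟩ := hG3.1
      have h1 : v ⬝ᵥ G *ᵥ v = D * (v ⬝ᵥ G'' *ᵥ v) := by
        rw [hveq, dotProduct_smul, smul_eq_mul]
      have h2 := hU1 v
      have h3 := hU2 v
      have h4 := hposG'' v hv
      nlinarith
    -- now the scalar inequality
    set x := Real.sqrt (a / A) with hx
    set y := Real.sqrt (b / B) with hy
    set z := Real.sqrt (c / D) with hz
    have hx1 : x ≤ 1 := by
      rw [hx, show (1:ℝ) = Real.sqrt 1 by simp]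
      exact Real.sqrt_le_sqrt (by rw [div_le_one hA0]; exact haA)
    have hy1 : y ≤ 1 := by
      rw [hy, show (1:ℝ) = Real.sqrt 1 by simp]
      exact Real.sqrt_le_sqrt (by rw [div_le_one hB0]; exact hbB)
    have hxyz : x * y ≤ z := by
      rw [hx, hy, hz, ← Real.sqrt_mul (by positivity)]
      apply Real.sqrt_le_sqrt
      rw [div_mul_div_comm]
      apply div_le_div₀ (le_of_lt hc0) hcab (by positivity)
      exact hDAB
    have hx0 : 0 ≤ x := Real.sqrt_nonneg _
    have hy0 : 0 ≤ y := Real.sqrt_nonneg _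
    simp only [dSR, ← ha, ← hA, ← hb, ← hB, ← hc, ← hD, ← hx, ← hy, ← hz]
    nlinarith [mul_nonneg (sub_nonneg.mpr hx1) (sub_nonneg.mpr hy1)]
end

section
/- Let G, G'' be symmetric positive definite m×m matrices with (positive) eigenvalues; let a = √(λ_max(G)), b = √(λ_min(G)), a'' = √(λ_max(G'')), b'' = √(λ_min(G'')). Then the generalized eigenvalue-based quantity d_SR(G, G'') = 1 - √(λ_min(G''^{-1}G)/λ_max(G''^{-1}G)) satisfies d_SR(G, G'') ≤ 1 - (b/a)·(b''/a''). -/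
open Matrix

/-- Rayleigh quotient bounds for a real symmetric matrix. -/
lemma rayleigh_bounds {m : ℕ} [NeZero m] {A : Matrix (Fin m) (Fin m) ℝ}
    (hA : A.IsHermitian) (v : Fin m → ℝ) :
    (⨅ i, hA.eigenvalues i) * (v ⬝ᵥ v) ≤ v ⬝ᵥ A *ᵥ v ∧
      v ⬝ᵥ A *ᵥ v ≤ (⨆ i, hA.eigenvalues i) * (v ⬝ᵥ v) := by
  set U : Matrix (Fin m) (Fin m) ℝ := (hA.eigenvectorUnitary : Matrix (Fin m) (Fin m) ℝ) with hU
  have hUU : U * star U = 1 := Unitary.mul_star_self_of_mem hA.eigenvectorUnitary.2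
  set w : Fin m → ℝ := (star U) *ᵥ v with hw
  have hstar : star U = Uᵀ := by
    ext i j
    simp [Matrix.star_apply, Matrix.conjTranspose_apply]
  have hdot : ∀ x : Fin m → ℝ, v ⬝ᵥ (U *ᵥ x) = w ⬝ᵥ x := by
    intro x
    rw [hw, hstar, Matrix.mulVec_transpose, Matrix.dotProduct_mulVec]
  have hvv : v ⬝ᵥ v = w ⬝ᵥ w := by
    have : w ⬝ᵥ w = v ⬝ᵥ (U *ᵥ w) := (hdot w).symm
    rw [this, hw, Matrix.mulVec_mulVec, hUU, Matrix.one_mulVec]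
  have hAv : v ⬝ᵥ A *ᵥ v = ∑ i, hA.eigenvalues i * (w i)^2 := by
    have hspec := hA.spectral_theorem
    rw [Unitary.conjStarAlgAut_apply, ← hU] at hspec
    conv_lhs => rw [hspec]
    rw [← Matrix.mulVec_mulVec, ← Matrix.mulVec_mulVec, hdot]
    have : diagonal (RCLike.ofReal ∘ hA.eigenvalues) *ᵥ w = fun i => hA.eigenvalues i * w i := by
      ext i; simp [Matrix.mulVec_diagonal]
    rw [← hw, this, dotProduct]
    congr 1; ext i; ring
  have hww : w ⬝ᵥ w = ∑ i, (w i)^2 := by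
    rw [dotProduct]; congr 1; ext i; ring
  constructor
  · rw [hAv, hvv, hww, Finset.mul_sum]
    apply Finset.sum_le_sum
    intro i _
    have h1 : (⨅ j, hA.eigenvalues j) ≤ hA.eigenvalues i :=
      ciInf_le (Set.Finite.bddBelow (Set.finite_range _)) i
    exact mul_le_mul_of_nonneg_right h1 (sq_nonneg _)
  · rw [hAv, hvv, hww, Finset.mul_sum]
    apply Finset.sum_le_sum
    intro i _
    have h1 : hA.eigenvalues i ≤ (⨆ j, hA.eigenvalues j) :=
      le_ciSup (Set.Finite.bddAbove (Set.finite_range _)) i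
    exact mul_le_mul_of_nonneg_right h1 (sq_nonneg _)

open scoped MatrixOrder Matrix.Norms.L2Operator

/-- The set of generalized eigenvalues of a pair of SPD matrices is nonempty. -/
lemma genEig_nonempty {m : ℕ} [NeZero m] {G G'' : Matrix (Fin m) (Fin m) ℝ}
    (hGh : G.IsHermitian) (hG'' : G''.PosDef) : (genEig G G'').Nonempty := by
  set Q : Matrix (Fin m) (Fin m) ℝ := CFC.sqrt G'' with hQdef
  have hQherm : Q.IsHermitian := (CFC.sqrt_nonneg G'').posSemidef.1
  have hQsq : Q * Q = G'' := CFC.sqrt_mul_sqrt_self G'' hG''.posSemidef.nonneg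
  have hdet : IsUnit Q.det := by
    have h2 : IsUnit (Q.det * Q.det) := by
      rw [← Matrix.det_mul, hQsq]; exact hG''.isUnit.map (Matrix.detMonoidHom)
    exact isUnit_of_mul_isUnit_left h2
  have hQQi : Q * Q⁻¹ = 1 := Matrix.mul_nonsing_inv Q hdet
  have hQiQ : Q⁻¹ * Q = 1 := Matrix.nonsing_inv_mul Q hdet
  set M : Matrix (Fin m) (Fin m) ℝ := Q⁻¹ * G * Q⁻¹ with hMdef
  have hMherm : M.IsHermitian := by
    simp only [hMdef, Matrix.IsHermitian, Matrix.conjTranspose_mul, hQherm.inv.eq, hGh.eq,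
      Matrix.mul_assoc]
  have hj : 0 < m := Nat.pos_of_ne_zero (NeZero.ne m)
  set j : Fin m := ⟨0, hj⟩ with hjdef
  set w : Fin m → ℝ := ⇑(hMherm.eigenvectorBasis j) with hwdef
  have hzw : w ≠ 0 := by
    have h0 : hMherm.eigenvectorBasis j ≠ 0 := by
      have := hMherm.eigenvectorBasis.toBasis.ne_zero j
      simpa using this
    exact fun h => h0 ((WithLp.ofLp_eq_zero 2).mp h)
  have hmv : M *ᵥ w = hMherm.eigenvalues j • w := hMherm.mulVec_eigenvectorBasis j
  refine ⟨hMherm.eigenvalues j, Q⁻¹ *ᵥ w, ?_, ?_⟩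
  · intro h
    apply hzw
    have hqw : Q *ᵥ (Q⁻¹ *ᵥ w) = w := by
      rw [Matrix.mulVec_mulVec, hQQi, Matrix.one_mulVec]
    rw [← hqw, h, Matrix.mulVec_zero]
  · show G *ᵥ (Q⁻¹ *ᵥ w) = _ • G'' *ᵥ (Q⁻¹ *ᵥ w)
    have h1 : Q⁻¹ *ᵥ (G *ᵥ (Q⁻¹ *ᵥ w)) = hMherm.eigenvalues j • w := by
      rw [Matrix.mulVec_mulVec, Matrix.mulVec_mulVec]
      exact hmv
    have h2 : G *ᵥ (Q⁻¹ *ᵥ w) = Q *ᵥ (hMherm.eigenvalues j • w) := by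
      have h2' : Q *ᵥ (Q⁻¹ *ᵥ (G *ᵥ (Q⁻¹ *ᵥ w))) = Q *ᵥ (hMherm.eigenvalues j • w) :=
        congrArg _ h1
      rwa [Matrix.mulVec_mulVec, hQQi, Matrix.one_mulVec] at h2'
    have h3 : G'' *ᵥ (Q⁻¹ *ᵥ w) = Q *ᵥ w := by
      rw [Matrix.mulVec_mulVec, ← hQsq, Matrix.mul_assoc, hQQi, Matrix.mul_one]
    rw [h2, h3, Matrix.mulVec_smul]

/-- the spectral ratio distance between SPD matrices G and G'' is bounded by
`1 - (b/a)·(b''/a'')` where a, b (resp. a'', b'') are the square roots of the extreme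
eigenvalues of G (resp. G''). -/
theorem dSR_le_eigenvalue_bound {m : ℕ} (hm : 0 < m) (G G'' : Matrix (Fin m) (Fin m) ℝ)
    (hG : G.PosDef) (hG'' : G''.PosDef) :
    dSR G G'' ≤ 1 - (Real.sqrt (⨅ i, hG.1.eigenvalues i) / Real.sqrt (⨆ i, hG.1.eigenvalues i)) *
      (Real.sqrt (⨅ i, hG''.1.eigenvalues i) / Real.sqrt (⨆ i, hG''.1.eigenvalues i)) := by
  haveI : NeZero m := ⟨hm.ne'⟩
  set lG := ⨅ i, hG.1.eigenvalues i with hlG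
  set LG := ⨆ i, hG.1.eigenvalues i with hLG
  set lG'' := ⨅ i, hG''.1.eigenvalues i with hlG''
  set LG'' := ⨆ i, hG''.1.eigenvalues i with hLG''
  have hlGpos : 0 < lG := by
    obtain ⟨i, hi⟩ := exists_eq_ciInf_of_finite (f := hG.1.eigenvalues)
    rw [hlG, ← hi]; exact hG.eigenvalues_pos i
  have hlG''pos : 0 < lG'' := by
    obtain ⟨i, hi⟩ := exists_eq_ciInf_of_finite (f := hG''.1.eigenvalues)
    rw [hlG'', ← hi]; exact hG''.eigenvalues_pos i
  have hLGpos : 0 < LG := lt_of_lt_of_le (hG.eigenvalues_pos ⟨0, hm⟩)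
    (le_ciSup (Set.Finite.bddAbove (Set.finite_range _)) _)
  have hLG''pos : 0 < LG'' := lt_of_lt_of_le (hG''.eigenvalues_pos ⟨0, hm⟩)
    (le_ciSup (Set.Finite.bddAbove (Set.finite_range _)) _)
  set ℓ := lG / LG'' with hℓ
  set L := LG / lG'' with hLdef
  have hℓpos : 0 < ℓ := div_pos hlGpos hLG''pos
  have hLpos : 0 < L := div_pos hLGpos hlG''pos
  -- every generalized eigenvalue lies in [ℓ, L]
  have hbound : ∀ lam ∈ genEig G G'', ℓ ≤ lam ∧ lam ≤ L := by
    rintro lam ⟨v, hv, heq⟩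
    have hp : 0 < v ⬝ᵥ G *ᵥ v := by
      have := hG.dotProduct_mulVec_pos hv
      simpa using this
    have hq : 0 < v ⬝ᵥ G'' *ᵥ v := by
      have := hG''.dotProduct_mulVec_pos hv
      simpa using this
    have hpq : v ⬝ᵥ G *ᵥ v = lam * (v ⬝ᵥ G'' *ᵥ v) := by
      rw [heq, dotProduct_smul, smul_eq_mul]
    have hlam : 0 < lam := by
      by_contra h
      push_neg at h
      nlinarith
    obtain ⟨hp1, hp2⟩ := rayleigh_bounds hG.1 v
    obtain ⟨hq1, hq2⟩ := rayleigh_bounds hG''.1 v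
    have hn : 0 < v ⬝ᵥ v := by nlinarith
    constructor
    · rw [hℓ, div_le_iff₀ hLG''pos]
      have h1 : lG * (v ⬝ᵥ v) ≤ lam * (LG'' * (v ⬝ᵥ v)) := by nlinarith
      have h2 : lG * (v ⬝ᵥ v) ≤ lam * LG'' * (v ⬝ᵥ v) := by linarith [h1, mul_assoc lam LG'' (v ⬝ᵥ v)]
      exact le_of_mul_le_mul_right h2 hn
    · rw [hLdef, le_div_iff₀ hlG''pos]
      have h1 : lam * lG'' * (v ⬝ᵥ v) ≤ LG * (v ⬝ᵥ v) := by nlinarith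
      exact le_of_mul_le_mul_right h1 hn
  have hne : (genEig G G'').Nonempty := genEig_nonempty hG.1 hG''
  obtain ⟨lam0, hlam0⟩ := hne
  have hbdd : BddAbove (genEig G G'') := ⟨L, fun x hx => (hbound x hx).2⟩
  have hsInf : ℓ ≤ sInf (genEig G G'') := le_csInf ⟨lam0, hlam0⟩ fun x hx => (hbound x hx).1
  have hsSup : sSup (genEig G G'') ≤ L := csSup_le ⟨lam0, hlam0⟩ fun x hx => (hbound x hx).2
  have hsSuppos : 0 < sSup (genEig G G'') :=
    lt_of_lt_of_le (lt_of_lt_of_le hℓpos (hbound lam0 hlam0).1) (le_csSup hbdd hlam0)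
  have hratio : ℓ / L ≤ sInf (genEig G G'') / sSup (genEig G G'') :=
    div_le_div₀ (le_trans hℓpos.le hsInf) hsInf hsSuppos hsSup
  have hsqrt : Real.sqrt (ℓ / L) ≤ Real.sqrt (sInf (genEig G G'') / sSup (genEig G G'')) :=
    Real.sqrt_le_sqrt hratio
  have hkey : Real.sqrt (ℓ / L) =
      (Real.sqrt lG / Real.sqrt LG) * (Real.sqrt lG'' / Real.sqrt LG'') := by
    rw [hℓ, hLdef, Real.sqrt_div (div_pos hlGpos hLG''pos).le, Real.sqrt_div hlGpos.le,
      Real.sqrt_div hLGpos.le]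
    have h1 : Real.sqrt LG ≠ 0 := (Real.sqrt_pos.2 hLGpos).ne'
    have h2 : Real.sqrt LG'' ≠ 0 := (Real.sqrt_pos.2 hLG''pos).ne'
    have h3 : Real.sqrt lG'' ≠ 0 := (Real.sqrt_pos.2 hlG''pos).ne'
    field_simp
  rw [dSR]
  have : Real.sqrt (ℓ / L) ≤ Real.sqrt (sInf (genEig G G'') / sSup (genEig G G'')) := hsqrt
  linarith [hkey ▸ hsqrt]
end
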